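/- In End(C^{1|1})^{⊗3}: P^{12}P^{13}P^{23} = P^{23}P^{13}P^{12}, P^{12}Q^{13}Q^{23} = Q^{23}Q^{13}P^{12}, Q^{12}Q^{13}P^{23} = P^{23}Q^{13}Q^{12}, and Q^{12}P^{13}Q^{23} = Q^{23}P^{13}Q^{12}. -/

import Mathlib

/-- Index set `{1,-1}` of `C^{1|1}`: `inl 0 = 1`, `inr 0 = -1`. -/
abbrev I1 := Fin 1 ⊕ Fin 1

def I1.neg : I1 → I1 := Sum.swap

def I1.par : I1 → ZMod 2
  | Sum.inl _ => 0
  | Sum.inr _ => 1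

/-- Matrix unit `ε_{ij}` of `End(C^{1|1})`. -/
noncomputable def eps (i j : I1) : Matrix I1 I1 ℂ := Matrix.single i j 1

/-- Super (Koszul-signed) tensor product `a ⊗ b ⊗ c` of three elements of `End(C^{1|1})`,
realized as the operator on `(C^{1|1})^{⊗3}`:
`(a⊗b⊗c)(v₁⊗v₂⊗v₃) = (-1)^{(|b|+|c|)|v₁| + |c||v₂|} a v₁ ⊗ b v₂ ⊗ c v₃`.
This realization is an isomorphism of the super tensor product algebra `End(C^{1|1})^{⊗3}`
onto `End((C^{1|1})^{⊗3})`. -/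
noncomputable def tmul3 (a b c : Matrix I1 I1 ℂ) :
    Matrix (I1 × I1 × I1) (I1 × I1 × I1) ℂ :=
  Matrix.of fun p q =>
    ((-1 : ℂ) ^ ((((I1.par p.2.1 + I1.par q.2.1) + (I1.par p.2.2 + I1.par q.2.2)) * I1.par q.1
        + (I1.par p.2.2 + I1.par q.2.2) * I1.par q.2.1).val))
      * a p.1 q.1 * b p.2.1 q.2.1 * c p.2.2 q.2.2

/-- `P^{12}` in `End(C^{1|1})^{⊗3}`. -/
noncomputable def P12 : Matrix (I1 × I1 × I1) (I1 × I1 × I1) ℂ :=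
  ∑ r : I1, ∑ s : I1, ((-1 : ℂ) ^ (I1.par s).val) • tmul3 (eps r s) (eps s r) 1

/-- `P^{13}` in `End(C^{1|1})^{⊗3}`. -/
noncomputable def P13 : Matrix (I1 × I1 × I1) (I1 × I1 × I1) ℂ :=
  ∑ r : I1, ∑ s : I1, ((-1 : ℂ) ^ (I1.par s).val) • tmul3 (eps r s) 1 (eps s r)

/-- `P^{23}` in `End(C^{1|1})^{⊗3}`. -/
noncomputable def P23 : Matrix (I1 × I1 × I1) (I1 × I1 × I1) ℂ :=
  ∑ r : I1, ∑ s : I1, ((-1 : ℂ) ^ (I1.par s).val) • tmul3 1 (eps r s) (eps s r)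

/-- `Q^{12}` in `End(C^{1|1})^{⊗3}`. -/
noncomputable def Q12 : Matrix (I1 × I1 × I1) (I1 × I1 × I1) ℂ :=
  ∑ r : I1, ∑ s : I1,
    ((-1 : ℂ) ^ (I1.par s).val) • tmul3 (eps r s) (eps (I1.neg s) (I1.neg r)) 1

/-- `Q^{13}` in `End(C^{1|1})^{⊗3}`. -/
noncomputable def Q13 : Matrix (I1 × I1 × I1) (I1 × I1 × I1) ℂ :=
  ∑ r : I1, ∑ s : I1,
    ((-1 : ℂ) ^ (I1.par s).val) • tmul3 (eps r s) 1 (eps (I1.neg s) (I1.neg r))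

/-- `Q^{23}` in `End(C^{1|1})^{⊗3}`. -/
noncomputable def Q23 : Matrix (I1 × I1 × I1) (I1 × I1 × I1) ℂ :=
  ∑ r : I1, ∑ s : I1,
    ((-1 : ℂ) ^ (I1.par s).val) • tmul3 1 (eps r s) (eps (I1.neg s) (I1.neg r))


section IntModel

def ieps (i j : I1) : Matrix I1 I1 ℤ := Matrix.single i j 1

def itmul3 (a b c : Matrix I1 I1 ℤ) :
    Matrix (I1 × I1 × I1) (I1 × I1 × I1) ℤ :=
  Matrix.of fun p q =>
    ((-1 : ℤ) ^ ((((I1.par p.2.1 + I1.par q.2.1) + (I1.par p.2.2 + I1.par q.2.2)) * I1.par q.1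
        + (I1.par p.2.2 + I1.par q.2.2) * I1.par q.2.1).val))
      * a p.1 q.1 * b p.2.1 q.2.1 * c p.2.2 q.2.2

def iP12 : Matrix (I1 × I1 × I1) (I1 × I1 × I1) ℤ :=
  ∑ r : I1, ∑ s : I1, ((-1 : ℤ) ^ (I1.par s).val) • itmul3 (ieps r s) (ieps s r) 1
def iP13 : Matrix (I1 × I1 × I1) (I1 × I1 × I1) ℤ :=
  ∑ r : I1, ∑ s : I1, ((-1 : ℤ) ^ (I1.par s).val) • itmul3 (ieps r s) 1 (ieps s r)
def iP23 : Matrix (I1 × I1 × I1) (I1 × I1 × I1) ℤ :=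
  ∑ r : I1, ∑ s : I1, ((-1 : ℤ) ^ (I1.par s).val) • itmul3 1 (ieps r s) (ieps s r)
def iQ12 : Matrix (I1 × I1 × I1) (I1 × I1 × I1) ℤ :=
  ∑ r : I1, ∑ s : I1,
    ((-1 : ℤ) ^ (I1.par s).val) • itmul3 (ieps r s) (ieps (I1.neg s) (I1.neg r)) 1
def iQ13 : Matrix (I1 × I1 × I1) (I1 × I1 × I1) ℤ :=
  ∑ r : I1, ∑ s : I1,
    ((-1 : ℤ) ^ (I1.par s).val) • itmul3 (ieps r s) 1 (ieps (I1.neg s) (I1.neg r))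
def iQ23 : Matrix (I1 × I1 × I1) (I1 × I1 × I1) ℤ :=
  ∑ r : I1, ∑ s : I1,
    ((-1 : ℤ) ^ (I1.par s).val) • itmul3 1 (ieps r s) (ieps (I1.neg s) (I1.neg r))

lemma P12_cast : P12 = iP12.map (Int.castRingHom ℂ) := by
  ext p q
  simp [P12, iP12, tmul3, itmul3, eps, ieps, Matrix.map_apply, Matrix.sum_apply,
    Matrix.smul_apply, Matrix.single, Matrix.one_apply, apply_ite ((↑·) : ℤ → ℂ)]

lemma P13_cast : P13 = iP13.map (Int.castRingHom ℂ) := by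
  ext p q
  simp [P13, iP13, tmul3, itmul3, eps, ieps, Matrix.map_apply, Matrix.sum_apply,
    Matrix.smul_apply, Matrix.single, Matrix.one_apply, apply_ite ((↑·) : ℤ → ℂ)]

lemma P23_cast : P23 = iP23.map (Int.castRingHom ℂ) := by
  ext p q
  simp [P23, iP23, tmul3, itmul3, eps, ieps, Matrix.map_apply, Matrix.sum_apply,
    Matrix.smul_apply, Matrix.single, Matrix.one_apply, apply_ite ((↑·) : ℤ → ℂ)]

lemma Q12_cast : Q12 = iQ12.map (Int.castRingHom ℂ) := by
  ext p q
  simp [Q12, iQ12, tmul3, itmul3, eps, ieps, Matrix.map_apply, Matrix.sum_apply,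
    Matrix.smul_apply, Matrix.single, Matrix.one_apply, apply_ite ((↑·) : ℤ → ℂ)]

lemma Q13_cast : Q13 = iQ13.map (Int.castRingHom ℂ) := by
  ext p q
  simp [Q13, iQ13, tmul3, itmul3, eps, ieps, Matrix.map_apply, Matrix.sum_apply,
    Matrix.smul_apply, Matrix.single, Matrix.one_apply, apply_ite ((↑·) : ℤ → ℂ)]

lemma Q23_cast : Q23 = iQ23.map (Int.castRingHom ℂ) := by
  ext p q
  simp [Q23, iQ23, tmul3, itmul3, eps, ieps, Matrix.map_apply, Matrix.sum_apply,
    Matrix.smul_apply, Matrix.single, Matrix.one_apply, apply_ite ((↑·) : ℤ → ℂ)]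

lemma irel1 : iP12 * iP13 * iP23 = iP23 * iP13 * iP12 := by decide
lemma irel2 : iP12 * iQ13 * iQ23 = iQ23 * iQ13 * iP12 := by decide
lemma irel3 : iQ12 * iQ13 * iP23 = iP23 * iQ13 * iQ12 := by decide
lemma irel4 : iQ12 * iP13 * iQ23 = iQ23 * iP13 * iQ12 := by decide

end IntModel

/-- Cubic relations among the operators `P^{ij}`, `Q^{ij}` in `End(C^{1|1})^{⊗3}`. -/
theorem stmt4 :
    P12 * P13 * P23 = P23 * P13 * P12 ∧
    P12 * Q13 * Q23 = Q23 * Q13 * P12 ∧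
    Q12 * Q13 * P23 = P23 * Q13 * Q12 ∧
    Q12 * P13 * Q23 = Q23 * P13 * Q12 := by
  refine ⟨?_, ?_, ?_, ?_⟩
  · rw [P12_cast, P13_cast, P23_cast, ← Matrix.map_mul, ← Matrix.map_mul, irel1,
      Matrix.map_mul, Matrix.map_mul]
  · rw [P12_cast, Q13_cast, Q23_cast, ← Matrix.map_mul, ← Matrix.map_mul, irel2,
      Matrix.map_mul, Matrix.map_mul]
  · rw [Q12_cast, Q13_cast, P23_cast, ← Matrix.map_mul, ← Matrix.map_mul, irel3,
      Matrix.map_mul, Matrix.map_mul]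
  · rw [Q12_cast, P13_cast, Q23_cast, ← Matrix.map_mul, ← Matrix.map_mul, irel4,
      Matrix.map_mul, Matrix.map_mul]
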